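/- Let G be a finite p-group such that (G, Z(G)) is a Camina pair. If there exists a maximal subgroup M₁ of G with Z(G) strictly contained in Z(M₁), then |Z(G)| = p. -/

import Mathlib

/-- `(G, Z(G))` is a Camina pair: `Z(G)` is a nontrivial proper (normal) subgroup and
`x * Z(G) ⊆ xᴳ` for every `x ∈ G \ Z(G)`. -/
def IsCaminaPairCenter (G : Type*) [Group G] : Prop :=
  Subgroup.center G ≠ ⊥ ∧ Subgroup.center G ≠ ⊤ ∧
    ∀ x : G, x ∉ Subgroup.center G → ∀ z ∈ Subgroup.center G, IsConj x (x * z)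

/-- A maximal subgroup of a finite `p`-group has index `p`. -/
lemma index_eq_p_of_isCoatom {p : ℕ} [hp : Fact p.Prime] {G : Type*} [Group G] [Finite G]
    (hpG : IsPGroup p G) {M : Subgroup G} (hM : IsCoatom M) : M.index = p := by
  have hnorm : M.Normal := by
    haveI : Group.IsNilpotent G := hpG.isNilpotent
    exact Subgroup.NormalizerCondition.normal_of_coatom M
      normalizerCondition_of_isNilpotent hM
  -- the quotient is a nontrivial p-group all of whose subgroups are trivial
  set Q := G ⧸ M
  have hQ : IsPGroup p Q := hpG.to_quotient M
  have hQnt : Nontrivial Q := by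
    by_contra hc
    exact hM.1 (QuotientGroup.subgroup_eq_top_of_subsingleton M
      (not_nontrivial_iff_subsingleton.mp hc))
  -- every subgroup of Q is ⊥ or ⊤
  have hsimple : ∀ H : Subgroup Q, H = ⊥ ∨ H = ⊤ := by
    intro H
    by_cases hH : H = ⊤
    · exact Or.inr hH
    · left
      have hker : (QuotientGroup.mk' M).ker = M := QuotientGroup.ker_mk' M
      have hle : M ≤ H.comap (QuotientGroup.mk' M) := fun x hx => by
        simp only [Subgroup.mem_comap]
        have : (QuotientGroup.mk' M) x = 1 := by
          rw [← MonoidHom.mem_ker, hker]; exact hx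
        rw [this]; exact H.one_mem
      have hne : H.comap (QuotientGroup.mk' M) ≠ ⊤ := by
        intro hc
        apply hH
        have := Subgroup.map_comap_eq_self_of_surjective
          (f := QuotientGroup.mk' M) (QuotientGroup.mk'_surjective M) (H := H)
        rw [← this, hc, Subgroup.map_top_of_surjective _ (QuotientGroup.mk'_surjective M)]
      have heq : H.comap (QuotientGroup.mk' M) = M := by
        rcases lt_or_eq_of_le hle with hlt | he
        · exact absurd (hM.2 _ hlt) hne
        · exact he.symm
      have := Subgroup.map_comap_eq_self_of_surjective
        (f := QuotientGroup.mk' M) (QuotientGroup.mk'_surjective M) (H := H)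
      rw [← this, heq, Subgroup.map_eq_bot_iff, hker]
  -- Q has a subgroup of order p, which must be ⊤
  obtain ⟨n, hn⟩ := hQ.exists_card_eq
  have hn1 : 1 ≤ n := by
    by_contra hc
    push_neg at hc
    interval_cases n
    · simp only [pow_zero] at hn
      exact (not_subsingleton_iff_nontrivial.mpr hQnt) (Nat.card_eq_one_iff_unique.mp hn).1
  obtain ⟨K, hK⟩ := Sylow.exists_subgroup_card_pow_prime (G := Q) p
    (n := 1) (by rw [hn, pow_one]; exact dvd_pow_self p (Nat.one_le_iff_ne_zero.mp hn1))
  rw [pow_one] at hK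
  have hKtop : K = ⊤ := by
    rcases hsimple K with hb | ht
    · rw [hb, Subgroup.card_bot] at hK
      exact absurd hK.symm hp.out.one_lt.ne'
    · exact ht
  have : Nat.card Q = p := by
    rw [← hK, hKtop, ← Nat.card_congr Subgroup.topEquiv.toEquiv]
  rw [Subgroup.index, this]

/-- If `(G, Z(G))` is a Camina pair for a finite `p`-group `G` and some maximal
subgroup `M₁` satisfies `Z(G) < Z(M₁)`, then `|Z(G)| = p`. -/
theorem card_center_eq_of_lt_center_maximal {p : ℕ} [Fact p.Prime] {G : Type*} [Group G]
    [Finite G] (hp : IsPGroup p G) (hC : IsCaminaPairCenter G)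
    (h : ∃ M₁ : Subgroup G, IsCoatom M₁ ∧
      Subgroup.center G < M₁ ⊓ Subgroup.centralizer (M₁ : Set G)) :
    Nat.card (Subgroup.center G) = p := by
  obtain ⟨M₁, hM, hlt⟩ := h
  obtain ⟨y, hyK, hyZ⟩ := SetLike.exists_of_lt hlt
  have hyC : y ∈ Subgroup.centralizer (M₁ : Set G) := hyK.2
  -- the centralizer of y contains M₁ and is proper, hence equals M₁
  have hMC : M₁ ≤ Subgroup.centralizer ({y} : Set G) := by
    intro m hm
    rw [Subgroup.mem_centralizer_iff]
    rintro x rfl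
    exact (Subgroup.mem_centralizer_iff.mp hyC m hm).symm
  have hCtop : Subgroup.centralizer ({y} : Set G) ≠ ⊤ := by
    intro hc
    apply hyZ
    rw [Subgroup.mem_center_iff]
    intro g
    have hg : g ∈ Subgroup.centralizer ({y} : Set G) := hc ▸ Subgroup.mem_top g
    exact (Subgroup.mem_centralizer_iff.mp hg y rfl).symm
  have hCe : Subgroup.centralizer ({y} : Set G) = M₁ := by
    rcases lt_or_eq_of_le hMC with hlt' | he
    · exact absurd (hM.2 _ hlt') hCtop
    · exact he.symm
  -- the conjugacy class of y has size index of the centralizer = p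
  have hidx : (Subgroup.centralizer ({y} : Set G)).index = p := by
    rw [hCe]; exact index_eq_p_of_isCoatom hp hM
  have hstab : (MulAction.stabilizer (ConjAct G) y).index = p := by
    have := Subgroup.centralizer_eq_comap_stabilizer y
    have hinj := Subgroup.index_comap_of_surjective
      (MulAction.stabilizer (ConjAct G) y)
      (f := ConjAct.toConjAct.toMonoidHom (M := G)) ConjAct.toConjAct.surjective
    have hinj : (Subgroup.centralizer ({y} : Set G)).index = _ :=
      (congrArg Subgroup.index this).trans hinj
    rw [← hinj, hidx]
  have horb : Nat.card (MulAction.orbit (ConjAct G) y) = p := by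
    have := Nat.card_congr (MulAction.orbitEquivQuotientStabilizer (ConjAct G) y)
    rw [this]
    exact hstab
  -- inject the center into the orbit
  have hinj : Function.Injective
      (fun z : Subgroup.center G => (⟨y * z, by
        rw [ConjAct.mem_orbit_conjAct]
        exact (hC.2.2 y hyZ z z.2).symm⟩ : MulAction.orbit (ConjAct G) y)) := by
    intro z₁ z₂ hz
    have : y * (z₁ : G) = y * (z₂ : G) := congrArg Subtype.val hz
    exact Subtype.ext (mul_left_cancel this)
  have hle : Nat.card (Subgroup.center G) ≤ p := by
    rw [← horb]
    exact Nat.card_le_card_of_injective _ hinj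
  -- the center is a nontrivial p-group, so its cardinality is at least p
  obtain ⟨k, hk⟩ := (hp.to_subgroup (Subgroup.center G)).exists_card_eq
  have hk1 : 1 ≤ k := by
    by_contra hc
    push_neg at hc
    interval_cases k
    · rw [pow_zero] at hk
      exact hC.1 (Subgroup.card_eq_one.mp hk)
  have hge : p ≤ Nat.card (Subgroup.center G) := by
    rw [hk]
    calc p = p ^ 1 := (pow_one p).symm
    _ ≤ p ^ k := Nat.pow_le_pow_right (Fact.out (p := p.Prime)).pos hk1
  omega
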